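/- Consider the controlled system ẋ₁ = −x₁x₂², ẋ₂ = u on ℝ² with feedback u(x) = −x₂³. Then the closed-loop vector field f(x) = (−x₁x₂², −x₂³) satisfies ⟨x, f(x)⟩ = −x₂²·‖x‖² ≤ 0, and div f(x) = −4x₂² ≤ 0; moreover for ρ(x) = ‖x‖^{2α} with positive integer α and constant β ≥ 1 with α > 2(β−1)/(β+1), one has div(ρ·f)(x) − β·ρ(x)²·div(ρ⁻¹·f)(x) < 0 whenever x₂ ≠ 0. -/

import Mathlib

open scoped BigOperators RealInnerProductSpace

/-- Divergence of a vector field on ℝ². -/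
noncomputable def vdiv (f : EuclideanSpace ℝ (Fin 2) → EuclideanSpace ℝ (Fin 2))
    (x : EuclideanSpace ℝ (Fin 2)) : ℝ :=
  ∑ i, fderiv ℝ f x (EuclideanSpace.single i (1:ℝ)) i

/-- The closed-loop vector field of Example 5 (d = 0) with u = -x₂³. -/
noncomputable def fCL (x : EuclideanSpace ℝ (Fin 2)) : EuclideanSpace ℝ (Fin 2) :=
  (EuclideanSpace.equiv (Fin 2) ℝ).symm ![-(x 0) * (x 1) ^ 2, -(x 1) ^ 3]

namespace Ex5aux

noncomputable abbrev EE := EuclideanSpace ℝ (Fin 2)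

noncomputable def p (i : Fin 2) : EE →L[ℝ] ℝ := EuclideanSpace.proj i
noncomputable def e (i : Fin 2) : EE := EuclideanSpace.single i (1:ℝ)

noncomputable def D0 (x : EE) : EE →L[ℝ] ℝ :=
  (-(x 0)) • (((2:ℕ) * (x 1) ^ 1) • p 1) + ((x 1)^2) • (-(p 0))
noncomputable def D1 (x : EE) : EE →L[ℝ] ℝ := -(((3:ℕ) * (x 1)^2) • p 1)
noncomputable def DF (x : EE) : EE →L[ℝ] EE := (D0 x).smulRight (e 0) + (D1 x).smulRight (e 1)

theorem fCL_deriv (x : EE) : HasFDerivAt fCL (DF x) x := by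
  have hp0 : HasFDerivAt (fun y : EE => y 0) (p 0) x := (p 0).hasFDerivAt
  have hp1 : HasFDerivAt (fun y : EE => y 1) (p 1) x := (p 1).hasFDerivAt
  have hsq : HasFDerivAt (fun y : EE => (y 1)^2) (((2:ℕ) * (x 1) ^ 1) • p 1) x :=
    by have := (hasDerivAt_pow 2 (x 1)).comp_hasFDerivAt x hp1; exact this
  have hcube : HasFDerivAt (fun y : EE => (y 1)^3) (((3:ℕ) * (x 1)^2) • p 1) x :=
    by have := (hasDerivAt_pow 3 (x 1)).comp_hasFDerivAt x hp1; exact this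
  have h0 : HasFDerivAt (fun y : EE => -(y 0) * (y 1)^2) (D0 x) x := hp0.neg.mul hsq
  have h1 : HasFDerivAt (fun y : EE => -(y 1)^3) (D1 x) x := hcube.neg
  have h : HasFDerivAt (fun y : EE => (-(y 0) * (y 1)^2) • e 0 + (-(y 1)^3) • e 1)
      (DF x) x := (h0.smul_const (e 0)).add (h1.smul_const (e 1))
  have hfe : fCL = fun y : EE => (-(y 0) * (y 1)^2) • e 0 + (-(y 1)^3) • e 1 := by
    funext y; ext i
    fin_cases i <;> simp [fCL, e, EuclideanSpace.single_apply]
  rw [hfe]; exact h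

theorem DF_eval (x : EE) : DF x (e 0) 0 + DF x (e 1) 1 = -4 * (x 1)^2 := by
  simp [DF, D0, D1, e, p, EuclideanSpace.single_apply]
  ring

theorem vdiv_fCL (x : EE) : vdiv fCL x = -4 * (x 1)^2 := by
  rw [vdiv, Fin.sum_univ_two, (fCL_deriv x).fderiv]
  exact DF_eval x

theorem fCL_app0 (x : EE) : fCL x 0 = -(x 0) * (x 1)^2 := by simp [fCL]
theorem fCL_app1 (x : EE) : fCL x 1 = -(x 1)^3 := by simp [fCL]

theorem vdiv_smul (c : EE → ℝ) (c' : EE →L[ℝ] ℝ) (x : EE) (h : HasFDerivAt c c' x) :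
    vdiv (fun y => c y • fCL y) x
      = c x * (-4 * (x 1)^2) + c' (e 0) * (fCL x 0) + c' (e 1) * (fCL x 1) := by
  have H : HasFDerivAt (fun y => c y • fCL y) (c x • DF x + c'.smulRight (fCL x)) x :=
    h.smul (fCL_deriv x)
  rw [vdiv, Fin.sum_univ_two, H.fderiv]
  show (c x • DF x + c'.smulRight (fCL x)) (e 0) 0
      + (c x • DF x + c'.smulRight (fCL x)) (e 1) 1 = _
  simp only [ContinuousLinearMap.add_apply, ContinuousLinearMap.smul_apply,
    ContinuousLinearMap.smulRight_apply, PiLp.add_apply, PiLp.smul_apply, smul_eq_mul]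
  linear_combination (c x) * (DF_eval x)

noncomputable def Cρ (x : EE) (α : ℕ) : EE →L[ℝ] ℝ :=
  ((α:ℝ) * (‖x‖^2)^(α-1)) • (2 • ((innerSL ℝ x).comp (ContinuousLinearMap.id ℝ EE)))

theorem rho_deriv (x : EE) (α : ℕ) :
    HasFDerivAt (fun y : EE => ‖y‖^(2*α)) (Cρ x α) x := by
  have hnsq : HasFDerivAt (fun y : EE => ‖y‖^2)
      (2 • ((innerSL ℝ x).comp (ContinuousLinearMap.id ℝ EE))) x := (hasFDerivAt_id x).norm_sq
  have h := (hasDerivAt_pow α (‖x‖^2)).comp_hasFDerivAt x hnsq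
  have he : (fun y : EE => ‖y‖^(2*α)) = fun y : EE => (‖y‖^2)^α := by
    funext y; rw [pow_mul]
  rw [he]; exact h

theorem Cρ_eval (x : EE) (α : ℕ) (j : Fin 2) :
    Cρ x α (e j) = (α:ℝ) * (‖x‖^2)^(α-1) * (2 * x j) := by
  fin_cases j <;>
    simp [Cρ, e, PiLp.inner_apply, EuclideanSpace.single_apply, RCLike.inner_apply,
      Fin.sum_univ_two]

end Ex5aux

open Ex5aux in
theorem example5_closed_loop :
    (∀ x : EuclideanSpace ℝ (Fin 2), ⟪x, fCL x⟫ = -(x 1) ^ 2 * ‖x‖ ^ 2 ∧ ⟪x, fCL x⟫ ≤ 0) ∧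
    (∀ x : EuclideanSpace ℝ (Fin 2), vdiv fCL x = -4 * (x 1) ^ 2 ∧ vdiv fCL x ≤ 0) ∧
    (∀ (α : ℕ) (β : ℝ), 0 < α → 1 ≤ β → (α : ℝ) > 2 * (β - 1) / (β + 1) →
      ∀ x : EuclideanSpace ℝ (Fin 2), x 1 ≠ 0 →
        vdiv (fun y => (‖y‖ ^ (2 * α)) • fCL y) x
          - β * (‖x‖ ^ (2 * α)) ^ 2 * vdiv (fun y => (‖y‖ ^ (2 * α))⁻¹ • fCL y) x < 0) := by
  refine ⟨fun x => ?_, fun x => ?_, ?_⟩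
  · have h : ⟪x, fCL x⟫ = -(x 1) ^ 2 * ‖x‖ ^ 2 := by
      have hn : ‖x‖ ^ 2 = (x 0)^2 + (x 1)^2 := by
        rw [EuclideanSpace.norm_eq, Real.sq_sqrt (by positivity)]
        simp [Fin.sum_univ_two]
      rw [hn]
      simp [fCL, PiLp.inner_apply, Fin.sum_univ_two]
      ring
    refine ⟨h, ?_⟩
    rw [h]
    have := mul_nonneg (sq_nonneg (x 1)) (sq_nonneg ‖x‖)
    nlinarith
  · refine ⟨vdiv_fCL x, ?_⟩
    rw [vdiv_fCL x]
    nlinarith [sq_nonneg (x 1)]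
  · intro α β hα0 hβ hαβ x hx1
    obtain ⟨k, rfl⟩ : ∃ k, α = k + 1 := ⟨α - 1, (Nat.succ_pred_eq_of_pos hα0).symm⟩
    have hxne : x ≠ 0 := by
      intro h; apply hx1; rw [h]; rfl
    have hnne : ‖x‖ ≠ 0 := norm_ne_zero_iff.mpr hxne
    have hs : (0:ℝ) < ‖x‖^2 := by positivity
    set s : ℝ := ‖x‖^2 with hs_def
    have hρ := rho_deriv x (k+1)
    have hρx : ‖x‖ ^ (2*(k+1)) = s^(k+1) := by rw [pow_mul]
    have hρne : ‖x‖ ^ (2*(k+1)) ≠ 0 := by rw [hρx]; positivity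
    have hρinv : HasFDerivAt (fun y : EE => (‖y‖^(2*(k+1)))⁻¹)
        ((-((‖x‖^(2*(k+1)))^2)⁻¹) • Cρ x (k+1)) x :=
      (hasDerivAt_inv hρne).comp_hasFDerivAt x hρ
    rw [vdiv_smul _ _ x hρ, vdiv_smul _ _ x hρinv]
    simp only [ContinuousLinearMap.smul_apply, smul_eq_mul]
    rw [Cρ_eval, Cρ_eval, fCL_app0, fCL_app1, hρx]
    have hk1 : k + 1 - 1 = k := rfl
    rw [hk1]
    set a : ℝ := s^(k+1) with ha_def
    have hinner : x 0 * (-(x 0) * (x 1)^2) + x 1 * (-(x 1)^3) = -(x 1)^2 * s := by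
      have hn : s = (x 0)^2 + (x 1)^2 := by
        rw [hs_def, EuclideanSpace.norm_eq, Real.sq_sqrt (by positivity)]
        simp [Fin.sum_univ_two]
      rw [hn]; ring
    have hske : a ≠ 0 := by rw [ha_def]; positivity
    have hsk : s^k * s = a := (pow_succ s k).symm
    have hC : ((k:ℝ)+1) * s ^ k * (2 * x 0) * (-(x 0) * (x 1)^2)
        + ((k:ℝ)+1) * s ^ k * (2 * x 1) * (-(x 1)^3)
        = -2*((k:ℝ)+1) * (x 1)^2 * a := by
      linear_combination (2*((k:ℝ)+1)*s^k) * hinner + (-(2*((k:ℝ)+1)*(x 1)^2)) * hsk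
    have e1 : a * a⁻¹ = 1 := mul_inv_cancel₀ hske
    have e2 : a^2 * (a^2)⁻¹ = 1 := mul_inv_cancel₀ (pow_ne_zero _ hske)
    have hEq : a * (-4 * (x 1)^2)
          + ((k:ℝ)+1) * s^k * (2 * x 0) * (-(x 0) * (x 1)^2)
          + ((k:ℝ)+1) * s^k * (2 * x 1) * (-(x 1)^3)
          - β * a^2 * (a⁻¹ * (-4 * (x 1)^2)
            + -(a^2)⁻¹ * (((k:ℝ)+1) * s^k * (2 * x 0)) * (-(x 0) * (x 1)^2)
            + -(a^2)⁻¹ * (((k:ℝ)+1) * s^k * (2 * x 1)) * (-(x 1)^3))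
        = -((x 1)^2) * a * ((4 + 2*((k:ℝ)+1)) + β * (2*((k:ℝ)+1) - 4)) := by
      linear_combination (1 + β*a^2*(a^2)⁻¹) * hC + (4*β*(x 1)^2*a) * e1
        + (-(2*β*((k:ℝ)+1)*(x 1)^2*a)) * e2
    push_cast
    rw [hEq]
    have hb1 : (0:ℝ) < β + 1 := by linarith
    have ha2 : 2*(β-1) < ((k:ℝ)+1)*(β+1) := by
      have := (div_lt_iff₀ hb1).mp hαβ
      push_cast at this
      linarith
    have hK : 0 < (4 + 2*((k:ℝ)+1)) + β * (2*((k:ℝ)+1) - 4) := by nlinarith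
    have hx1sq : 0 < (x 1)^2 := pow_two_pos_of_ne_zero hx1
    have hap : 0 < a := by rw [ha_def]; positivity
    nlinarith [mul_pos (mul_pos hx1sq hap) hK]
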